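/- Every 2-connected [4,2]-graph of order at least seven contains either a diamond (K_4 minus an edge) or a house (C_5 plus one chord) as a subgraph. -/
import Mathlib

open SimpleGraph

/-- The number of edges of `G` both of whose endpoints lie in `S`. -/
noncomputable def edgesWithin {V : Type*} (G : SimpleGraph V) (S : Finset V) : ℕ :=
  {e : Sym2 V | e ∈ G.edgeSet ∧ ∀ v ∈ e, v ∈ S}.ncard

/-- `G` is an `[s,t]`-graph: order at least `s`, and every induced subgraph on
`s` vertices has at least `t` edges. -/
def IsSTGraph {V : Type*} [Fintype V] (G : SimpleGraph V) (s t : ℕ) : Prop :=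
  s ≤ Fintype.card V ∧ ∀ S : Finset V, S.card = s → t ≤ edgesWithin G S

/-- `G` is 2-connected: at least 3 vertices, and deleting any single vertex
leaves a connected graph. -/
def TwoConnected {V : Type*} [Fintype V] (G : SimpleGraph V) : Prop :=
  3 ≤ Fintype.card V ∧ ∀ v : V, (G.induce {w : V | w ≠ v}).Connected

/-- The edge `e` lies on a cycle of length `k` in `G`. -/
def EdgeOnCycle {V : Type*} (G : SimpleGraph V) (e : Sym2 V) (k : ℕ) : Prop :=
  ∃ (u : V) (w : G.Walk u u), w.IsCycle ∧ w.length = k ∧ e ∈ w.edges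

/-- `G` has a cycle of length `k`. -/
def HasCycleLen {V : Type*} (G : SimpleGraph V) (k : ℕ) : Prop :=
  ∃ (u : V) (w : G.Walk u u), w.IsCycle ∧ w.length = k

/-- G contains a diamond (K₄ minus an edge) as a subgraph. -/
def HasDiamond {V : Type*} (G : SimpleGraph V) : Prop :=
  ∃ a b c d : V, a ≠ b ∧ a ≠ c ∧ a ≠ d ∧ b ≠ c ∧ b ≠ d ∧ c ≠ d ∧
    G.Adj a b ∧ G.Adj a c ∧ G.Adj a d ∧ G.Adj b c ∧ G.Adj b d

/-- G contains a house (C₅ plus one chord) as a subgraph: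
the 5-cycle a b c d e together with the chord a c. -/
def HasHouse {V : Type*} (G : SimpleGraph V) : Prop :=
  ∃ a b c d e : V, a ≠ b ∧ a ≠ c ∧ a ≠ d ∧ a ≠ e ∧ b ≠ c ∧ b ≠ d ∧ b ≠ e ∧
    c ≠ d ∧ c ≠ e ∧ d ≠ e ∧
    G.Adj a b ∧ G.Adj b c ∧ G.Adj c d ∧ G.Adj d e ∧ G.Adj e a ∧ G.Adj a c

/- ===================== auxiliary lemmas ===================== -/

lemma fiveDead {V : Type*} [Fintype V] {G : SimpleGraph V} (h42 : IsSTGraph G 4 2)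
    {p q r s : V} (hpq : p ≠ q) (hpr : p ≠ r) (hps : p ≠ s)
    (hqr : q ≠ r) (hqs : q ≠ s) (hrs : r ≠ s)
    (h1 : ¬ G.Adj p r) (h2 : ¬ G.Adj p s) (h3 : ¬ G.Adj q r) (h4 : ¬ G.Adj q s)
    (h5 : ¬ G.Adj r s) : False := by
  classical
  have hcard : ({p, q, r, s} : Finset V).card = 4 := by
    rw [Finset.card_insert_of_notMem (by simp [hpq, hpr, hps]),
        Finset.card_insert_of_notMem (by simp [hqr, hqs]),
        Finset.card_insert_of_notMem (by simp [hrs])]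
    simp
  have hle := h42.2 _ hcard
  have hsub : {e : Sym2 V | e ∈ G.edgeSet ∧ ∀ v ∈ e, v ∈ ({p, q, r, s} : Finset V)}
      ⊆ {s(p, q)} := by
    intro e he
    induction e with
    | h x y =>
      obtain ⟨hadj, hmem⟩ := he
      rw [SimpleGraph.mem_edgeSet] at hadj
      have hx := hmem x (Sym2.mem_mk_left x y)
      have hy := hmem y (Sym2.mem_mk_right x y)
      simp only [Finset.mem_insert, Finset.mem_singleton] at hx hy
      rcases hx with rfl | rfl | rfl | rfl <;> rcases hy with rfl | rfl | rfl | rfl <;>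
        first
          | exact absurd rfl hadj.ne
          | exact absurd hadj h1
          | exact absurd hadj h2
          | exact absurd hadj h3
          | exact absurd hadj h4
          | exact absurd hadj h5
          | exact absurd hadj.symm h1
          | exact absurd hadj.symm h2
          | exact absurd hadj.symm h3
          | exact absurd hadj.symm h4
          | exact absurd hadj.symm h5
          | rfl
          | exact Sym2.eq_swap
  have hle1 : edgesWithin G {p, q, r, s} ≤ 1 := by
    unfold edgesWithin
    calc {e : Sym2 V | e ∈ G.edgeSet ∧ ∀ v ∈ e, v ∈ ({p, q, r, s} : Finset V)}.ncard
        ≤ ({s(p, q)} : Set (Sym2 V)).ncard :=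
          Set.ncard_le_ncard hsub (Set.finite_singleton _)
      _ = 1 := Set.ncard_singleton _
  omega

lemma forceAdj {V : Type*} [Fintype V] {G : SimpleGraph V} (h42 : IsSTGraph G 4 2)
    {p q u v : V} (hpq : G.Adj p q) (huv : u ≠ v)
    (hup : u ≠ p) (huq : u ≠ q) (hvp : v ≠ p) (hvq : v ≠ q)
    (n1 : ¬G.Adj u p) (n2 : ¬G.Adj u q) (n3 : ¬G.Adj v p) (n4 : ¬G.Adj v q) :
    G.Adj u v := by
  by_contra hn
  exact fiveDead h42 hpq.ne hup.symm hvp.symm huq.symm hvq.symm huv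
    (fun h => n1 h.symm) (fun h => n3 h.symm) (fun h => n2 h.symm) (fun h => n4 h.symm) hn

lemma diaFree {V : Type*} {G : SimpleGraph V} (hd : ¬HasDiamond G) {a b c x : V}
    (hab : G.Adj a b) (hbc : G.Adj b c) (hac : G.Adj a c)
    (hxa : G.Adj x a) (hxb : G.Adj x b) (hxc : x ≠ c) : False :=
  hd ⟨a, b, c, x, hab.ne, hac.ne, hxa.ne', hbc.ne, hxb.ne', hxc.symm,
    hab, hac, hxa.symm, hbc, hxb.symm⟩

lemma houseFree {V : Type*} {G : SimpleGraph V} (hh : ¬HasHouse G) {a b c x y : V}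
    (hab : G.Adj a b) (hbc : G.Adj b c) (hac : G.Adj a c)
    (hxa : G.Adj x a) (hyc : G.Adj y c)
    (hxb : x ≠ b) (hxc : x ≠ c) (hya : y ≠ a) (hyb : y ≠ b) (hxy : x ≠ y) :
    ¬ G.Adj x y := fun hadj =>
  hh ⟨a, b, c, y, x, hab.ne, hac.ne, hya.symm, hxa.ne', hbc.ne, hyb.symm, hxb.symm,
    hyc.ne', hxc.symm, hxy.symm, hab, hbc, hyc.symm, hadj.symm, hxa, hac⟩

lemma pairLemma {V : Type*} [Fintype V] {G : SimpleGraph V} (h42 : IsSTGraph G 4 2)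
    (hd : ¬HasDiamond G) (hh : ¬HasHouse G) {a b c x y w1 w2 : V}
    (hab : G.Adj a b) (hbc : G.Adj b c) (hac : G.Adj a c)
    (hxA : x ≠ a) (hxB : x ≠ b) (hxC : x ≠ c)
    (hyA : y ≠ a) (hyB : y ≠ b) (hyC : y ≠ c)
    (h1A : w1 ≠ a) (h1B : w1 ≠ b) (h1C : w1 ≠ c)
    (h2A : w2 ≠ a) (h2B : w2 ≠ b) (h2C : w2 ≠ c)
    (hxy : x ≠ y) (hxw1 : x ≠ w1) (hxw2 : x ≠ w2)
    (hyw1 : y ≠ w1) (hyw2 : y ≠ w2) (hw12 : w1 ≠ w2)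
    (hxa : G.Adj x a) (hxb : ¬G.Adj x b) (hxc : ¬G.Adj x c)
    (hyb : G.Adj y b) (hya : ¬G.Adj y a) (hyc : ¬G.Adj y c)
    (s1ab : ¬(G.Adj w1 a ∧ G.Adj w1 b)) (s1ac : ¬(G.Adj w1 a ∧ G.Adj w1 c))
    (s1bc : ¬(G.Adj w1 b ∧ G.Adj w1 c))
    (s2ab : ¬(G.Adj w2 a ∧ G.Adj w2 b)) (s2ac : ¬(G.Adj w2 a ∧ G.Adj w2 c))
    (s2bc : ¬(G.Adj w2 b ∧ G.Adj w2 c)) : False := by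
  have nxy : ¬G.Adj x y := houseFree hh hac hbc.symm hab hxa hyb hxC hxB hyA hyC hxy
  have keyA : ∀ w : V, w ≠ b → w ≠ c → x ≠ w → y ≠ w →
      G.Adj w a → ¬G.Adj w b → ¬G.Adj w c → False := by
    intro w hwB hwC hxw hyw hwa hwb hwc
    have nwy : ¬G.Adj w y := houseFree hh hac hbc.symm hab hwa hyb hwC hwB hyA hyC hyw.symm
    exact fiveDead h42 hxw hxy hxC hyw.symm hwC hyC nxy hxc nwy hwc hyc
  have keyB : ∀ w : V, w ≠ a → w ≠ c → x ≠ w → y ≠ w →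
      G.Adj w b → ¬G.Adj w a → ¬G.Adj w c → False := by
    intro w hwA hwC hxw hyw hwb hwa hwc
    have nwx : ¬G.Adj w x := houseFree hh hbc hac.symm hab.symm hwb hxa hwC hwA hxB hxC hxw.symm
    exact fiveDead h42 hyw hxy.symm hyC hxw.symm hwC hxC
      (fun h => nxy h.symm) hyc nwx hwc hxc
  have keyC : ∀ w : V, w ≠ a → w ≠ b → x ≠ w → y ≠ w →
      G.Adj w c → ¬G.Adj w a → ¬G.Adj w b → False := by
    intro w hwA hwB hxw hyw hwc hwa hwb
    have nxw : ¬G.Adj x w := houseFree hh hab hbc hac hxa hwc hxB hxC hwA hwB hxw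
    have nyw : ¬G.Adj y w := houseFree hh hab.symm hac hbc hyb hwc hyA hyC hwB hwA hyw
    exact fiveDead h42 hxA.symm hyA.symm hwA.symm hxy hxw hyw
      (fun h => hya h.symm) (fun h => hwa h.symm) nxy nxw nyw
  have T1 : (G.Adj w1 a ∧ ¬G.Adj w1 b ∧ ¬G.Adj w1 c) ∨
      (¬G.Adj w1 a ∧ G.Adj w1 b ∧ ¬G.Adj w1 c) ∨
      (¬G.Adj w1 a ∧ ¬G.Adj w1 b ∧ G.Adj w1 c) ∨
      (¬G.Adj w1 a ∧ ¬G.Adj w1 b ∧ ¬G.Adj w1 c) := by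
    by_cases hA : G.Adj w1 a
    · exact Or.inl ⟨hA, fun hB => s1ab ⟨hA, hB⟩, fun hC => s1ac ⟨hA, hC⟩⟩
    · by_cases hB : G.Adj w1 b
      · exact Or.inr (Or.inl ⟨hA, hB, fun hC => s1bc ⟨hB, hC⟩⟩)
      · by_cases hC : G.Adj w1 c
        · exact Or.inr (Or.inr (Or.inl ⟨hA, hB, hC⟩))
        · exact Or.inr (Or.inr (Or.inr ⟨hA, hB, hC⟩))
  rcases T1 with ⟨u1, u2, u3⟩ | ⟨u1, u2, u3⟩ | ⟨u1, u2, u3⟩ | ⟨u1, u2, u3⟩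
  · exact keyA w1 h1B h1C hxw1 hyw1 u1 u2 u3
  · exact keyB w1 h1A h1C hxw1 hyw1 u2 u1 u3
  · exact keyC w1 h1A h1B hxw1 hyw1 u3 u1 u2
  · have T2 : (G.Adj w2 a ∧ ¬G.Adj w2 b ∧ ¬G.Adj w2 c) ∨
        (¬G.Adj w2 a ∧ G.Adj w2 b ∧ ¬G.Adj w2 c) ∨
        (¬G.Adj w2 a ∧ ¬G.Adj w2 b ∧ G.Adj w2 c) ∨
        (¬G.Adj w2 a ∧ ¬G.Adj w2 b ∧ ¬G.Adj w2 c) := by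
      by_cases hA : G.Adj w2 a
      · exact Or.inl ⟨hA, fun hB => s2ab ⟨hA, hB⟩, fun hC => s2ac ⟨hA, hC⟩⟩
      · by_cases hB : G.Adj w2 b
        · exact Or.inr (Or.inl ⟨hA, hB, fun hC => s2bc ⟨hB, hC⟩⟩)
        · by_cases hC : G.Adj w2 c
          · exact Or.inr (Or.inr (Or.inl ⟨hA, hB, hC⟩))
          · exact Or.inr (Or.inr (Or.inr ⟨hA, hB, hC⟩))
    rcases T2 with ⟨t1, t2, t3⟩ | ⟨t1, t2, t3⟩ | ⟨t1, t2, t3⟩ | ⟨t1, t2, t3⟩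
    · exact keyA w2 h2B h2C hxw2 hyw2 t1 t2 t3
    · exact keyB w2 h2A h2C hxw2 hyw2 t2 t1 t3
    · exact keyC w2 h2A h2B hxw2 hyw2 t3 t1 t2
    · have A12 : G.Adj w1 w2 := forceAdj h42 hbc hw12 h1B h1C h2B h2C u2 u3 t2 t3
      have A1x : G.Adj w1 x := forceAdj h42 hbc hxw1.symm h1B h1C hxB hxC u2 u3 hxb hxc
      have A1y : G.Adj w1 y := forceAdj h42 hac hyw1.symm h1A h1C hyA hyC u1 u3 hya hyc
      have A2x : G.Adj w2 x := forceAdj h42 hbc hxw2.symm h2B h2C hxB hxC t2 t3 hxb hxc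
      have A2y : G.Adj w2 y := forceAdj h42 hac hyw2.symm h2A h2C hyA hyC t1 t3 hya hyc
      exact hd ⟨w1, w2, x, y, hw12, hxw1.symm, hyw1.symm, hxw2.symm, hyw2.symm, hxy,
        A12, A1x, A1y, A2x, A2y⟩

lemma typeSplit {V : Type*} {G : SimpleGraph V} {w a b c : V}
    (sab : ¬(G.Adj w a ∧ G.Adj w b)) (sac : ¬(G.Adj w a ∧ G.Adj w c))
    (sbc : ¬(G.Adj w b ∧ G.Adj w c)) :
    (G.Adj w a ∧ ¬G.Adj w b ∧ ¬G.Adj w c) ∨ (¬G.Adj w a ∧ G.Adj w b ∧ ¬G.Adj w c) ∨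
    (¬G.Adj w a ∧ ¬G.Adj w b ∧ G.Adj w c) ∨ (¬G.Adj w a ∧ ¬G.Adj w b ∧ ¬G.Adj w c) := by
  classical
  by_cases hA : G.Adj w a
  · exact Or.inl ⟨hA, fun hB => sab ⟨hA, hB⟩, fun hC => sac ⟨hA, hC⟩⟩
  · by_cases hB : G.Adj w b
    · exact Or.inr (Or.inl ⟨hA, hB, fun hC => sbc ⟨hB, hC⟩⟩)
    · by_cases hC : G.Adj w c
      · exact Or.inr (Or.inr (Or.inl ⟨hA, hB, hC⟩))
      · exact Or.inr (Or.inr (Or.inr ⟨hA, hB, hC⟩))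

lemma anchored {V : Type*} [Fintype V] {G : SimpleGraph V} (h42 : IsSTGraph G 4 2)
    (hd : ¬HasDiamond G) (hh : ¬HasHouse G) {a b c x v2 v3 v4 : V}
    (hab : G.Adj a b) (hbc : G.Adj b c) (hac : G.Adj a c)
    (hxA : x ≠ a) (hxB : x ≠ b) (hxC : x ≠ c)
    (h2A : v2 ≠ a) (h2B : v2 ≠ b) (h2C : v2 ≠ c)
    (h3A : v3 ≠ a) (h3B : v3 ≠ b) (h3C : v3 ≠ c)
    (h4A : v4 ≠ a) (h4B : v4 ≠ b) (h4C : v4 ≠ c)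
    (hx2 : x ≠ v2) (hx3 : x ≠ v3) (hx4 : x ≠ v4)
    (h23 : v2 ≠ v3) (h24 : v2 ≠ v4) (h34 : v3 ≠ v4)
    (hxa : G.Adj x a) (hxb : ¬G.Adj x b) (hxc : ¬G.Adj x c)
    (s2ab : ¬(G.Adj v2 a ∧ G.Adj v2 b)) (s2ac : ¬(G.Adj v2 a ∧ G.Adj v2 c))
    (s2bc : ¬(G.Adj v2 b ∧ G.Adj v2 c))
    (s3ab : ¬(G.Adj v3 a ∧ G.Adj v3 b)) (s3ac : ¬(G.Adj v3 a ∧ G.Adj v3 c))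
    (s3bc : ¬(G.Adj v3 b ∧ G.Adj v3 c))
    (s4ab : ¬(G.Adj v4 a ∧ G.Adj v4 b)) (s4ac : ¬(G.Adj v4 a ∧ G.Adj v4 c))
    (s4bc : ¬(G.Adj v4 b ∧ G.Adj v4 c)) : False := by
  have E2 : ¬G.Adj v2 b ∧ ¬G.Adj v2 c := by
    rcases typeSplit s2ab s2ac s2bc with ⟨u1, u2, u3⟩ | ⟨u1, u2, u3⟩ | ⟨u1, u2, u3⟩ | ⟨u1, u2, u3⟩
    · exact ⟨u2, u3⟩
    · exact (pairLemma h42 hd hh hab hbc hac hxA hxB hxC h2A h2B h2C h3A h3B h3C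
        h4A h4B h4C hx2 hx3 hx4 h23 h24 h34 hxa hxb hxc u2 u1 u3
        s3ab s3ac s3bc s4ab s4ac s4bc).elim
    · exact (pairLemma h42 hd hh hac hbc.symm hab hxA hxC hxB h2A h2C h2B h3A h3C h3B
        h4A h4C h4B hx2 hx3 hx4 h23 h24 h34 hxa hxc hxb u3 u1 u2
        s3ac s3ab (fun h => s3bc ⟨h.2, h.1⟩) s4ac s4ab (fun h => s4bc ⟨h.2, h.1⟩)).elim
    · exact ⟨u2, u3⟩
  have E3 : ¬G.Adj v3 b ∧ ¬G.Adj v3 c := by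
    rcases typeSplit s3ab s3ac s3bc with ⟨u1, u2, u3⟩ | ⟨u1, u2, u3⟩ | ⟨u1, u2, u3⟩ | ⟨u1, u2, u3⟩
    · exact ⟨u2, u3⟩
    · exact (pairLemma h42 hd hh hab hbc hac hxA hxB hxC h3A h3B h3C h2A h2B h2C
        h4A h4B h4C hx3 hx2 hx4 h23.symm h34 h24 hxa hxb hxc u2 u1 u3
        s2ab s2ac s2bc s4ab s4ac s4bc).elim
    · exact (pairLemma h42 hd hh hac hbc.symm hab hxA hxC hxB h3A h3C h3B h2A h2C h2B
        h4A h4C h4B hx3 hx2 hx4 h23.symm h34 h24 hxa hxc hxb u3 u1 u2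
        s2ac s2ab (fun h => s2bc ⟨h.2, h.1⟩) s4ac s4ab (fun h => s4bc ⟨h.2, h.1⟩)).elim
    · exact ⟨u2, u3⟩
  have E4 : ¬G.Adj v4 b ∧ ¬G.Adj v4 c := by
    rcases typeSplit s4ab s4ac s4bc with ⟨u1, u2, u3⟩ | ⟨u1, u2, u3⟩ | ⟨u1, u2, u3⟩ | ⟨u1, u2, u3⟩
    · exact ⟨u2, u3⟩
    · exact (pairLemma h42 hd hh hab hbc hac hxA hxB hxC h4A h4B h4C h2A h2B h2C
        h3A h3B h3C hx4 hx2 hx3 h24.symm h34.symm h23 hxa hxb hxc u2 u1 u3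
        s2ab s2ac s2bc s3ab s3ac s3bc).elim
    · exact (pairLemma h42 hd hh hac hbc.symm hab hxA hxC hxB h4A h4C h4B h2A h2C h2B
        h3A h3C h3B hx4 hx2 hx3 h24.symm h34.symm h23 hxa hxc hxb u3 u1 u2
        s2ac s2ab (fun h => s2bc ⟨h.2, h.1⟩) s3ac s3ab (fun h => s3bc ⟨h.2, h.1⟩)).elim
    · exact ⟨u2, u3⟩
  have A2 : G.Adj x v2 := forceAdj h42 hbc hx2 hxB hxC h2B h2C hxb hxc E2.1 E2.2
  have A3 : G.Adj x v3 := forceAdj h42 hbc hx3 hxB hxC h3B h3C hxb hxc E3.1 E3.2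
  have A4 : G.Adj x v4 := forceAdj h42 hbc hx4 hxB hxC h4B h4C hxb hxc E4.1 E4.2
  have A23 : G.Adj v2 v3 := forceAdj h42 hbc h23 h2B h2C h3B h3C E2.1 E2.2 E3.1 E3.2
  have A24 : G.Adj v2 v4 := forceAdj h42 hbc h24 h2B h2C h4B h4C E2.1 E2.2 E4.1 E4.2
  exact hd ⟨x, v2, v3, v4, hx2, hx3, hx4, h23, h24, h34, A2, A3, A4, A23, A24⟩

lemma triMain {V : Type*} [Fintype V] {G : SimpleGraph V} (h42 : IsSTGraph G 4 2)
    (hd : ¬HasDiamond G) (hh : ¬HasHouse G) {a b c v1 v2 v3 v4 : V}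
    (hab : G.Adj a b) (hbc : G.Adj b c) (hac : G.Adj a c)
    (h1A : v1 ≠ a) (h1B : v1 ≠ b) (h1C : v1 ≠ c)
    (h2A : v2 ≠ a) (h2B : v2 ≠ b) (h2C : v2 ≠ c)
    (h3A : v3 ≠ a) (h3B : v3 ≠ b) (h3C : v3 ≠ c)
    (h4A : v4 ≠ a) (h4B : v4 ≠ b) (h4C : v4 ≠ c)
    (h12 : v1 ≠ v2) (h13 : v1 ≠ v3) (h14 : v1 ≠ v4)
    (h23 : v2 ≠ v3) (h24 : v2 ≠ v4) (h34 : v3 ≠ v4) : False := by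
  have mkS : ∀ w : V, w ≠ a → w ≠ b → w ≠ c →
      ¬(G.Adj w a ∧ G.Adj w b) ∧ ¬(G.Adj w a ∧ G.Adj w c) ∧ ¬(G.Adj w b ∧ G.Adj w c) :=
    fun w hA hB hC =>
      ⟨fun h => diaFree hd hab hbc hac h.1 h.2 hC,
       fun h => diaFree hd hac hbc.symm hab h.1 h.2 hB,
       fun h => diaFree hd hbc hac.symm hab.symm h.1 h.2 hA⟩
  obtain ⟨s1ab, s1ac, s1bc⟩ := mkS v1 h1A h1B h1C
  obtain ⟨s2ab, s2ac, s2bc⟩ := mkS v2 h2A h2B h2C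
  obtain ⟨s3ab, s3ac, s3bc⟩ := mkS v3 h3A h3B h3C
  obtain ⟨s4ab, s4ac, s4bc⟩ := mkS v4 h4A h4B h4C
  rcases typeSplit s1ab s1ac s1bc with ⟨u1, u2, u3⟩ | ⟨u1, u2, u3⟩ | ⟨u1, u2, u3⟩ | ⟨u11, u12, u13⟩
  · exact anchored h42 hd hh hab hbc hac h1A h1B h1C h2A h2B h2C h3A h3B h3C h4A h4B h4C
      h12 h13 h14 h23 h24 h34 u1 u2 u3 s2ab s2ac s2bc s3ab s3ac s3bc s4ab s4ac s4bc
  · exact anchored h42 hd hh hab.symm hac hbc h1B h1A h1C h2B h2A h2C h3B h3A h3C h4B h4A h4C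
      h12 h13 h14 h23 h24 h34 u2 u1 u3
      (fun h => s2ab ⟨h.2, h.1⟩) s2bc s2ac
      (fun h => s3ab ⟨h.2, h.1⟩) s3bc s3ac
      (fun h => s4ab ⟨h.2, h.1⟩) s4bc s4ac
  · exact anchored h42 hd hh hac.symm hab hbc.symm h1C h1A h1B h2C h2A h2B h3C h3A h3B
      h4C h4A h4B h12 h13 h14 h23 h24 h34 u3 u1 u2
      (fun h => s2ac ⟨h.2, h.1⟩) (fun h => s2bc ⟨h.2, h.1⟩) s2ab
      (fun h => s3ac ⟨h.2, h.1⟩) (fun h => s3bc ⟨h.2, h.1⟩) s3ab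
      (fun h => s4ac ⟨h.2, h.1⟩) (fun h => s4bc ⟨h.2, h.1⟩) s4ab
  · rcases typeSplit s2ab s2ac s2bc with ⟨u1, u2, u3⟩ | ⟨u1, u2, u3⟩ | ⟨u1, u2, u3⟩ | ⟨u21, u22, u23⟩
    · exact anchored h42 hd hh hab hbc hac h2A h2B h2C h1A h1B h1C h3A h3B h3C h4A h4B h4C
        h12.symm h23 h24 h13 h14 h34 u1 u2 u3 s1ab s1ac s1bc s3ab s3ac s3bc s4ab s4ac s4bc
    · exact anchored h42 hd hh hab.symm hac hbc h2B h2A h2C h1B h1A h1C h3B h3A h3C h4B h4A h4C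
        h12.symm h23 h24 h13 h14 h34 u2 u1 u3
        (fun h => s1ab ⟨h.2, h.1⟩) s1bc s1ac
        (fun h => s3ab ⟨h.2, h.1⟩) s3bc s3ac
        (fun h => s4ab ⟨h.2, h.1⟩) s4bc s4ac
    · exact anchored h42 hd hh hac.symm hab hbc.symm h2C h2A h2B h1C h1A h1B h3C h3A h3B
        h4C h4A h4B h12.symm h23 h24 h13 h14 h34 u3 u1 u2
        (fun h => s1ac ⟨h.2, h.1⟩) (fun h => s1bc ⟨h.2, h.1⟩) s1ab
        (fun h => s3ac ⟨h.2, h.1⟩) (fun h => s3bc ⟨h.2, h.1⟩) s3ab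
        (fun h => s4ac ⟨h.2, h.1⟩) (fun h => s4bc ⟨h.2, h.1⟩) s4ab
    · rcases typeSplit s3ab s3ac s3bc with ⟨u1, u2, u3⟩ | ⟨u1, u2, u3⟩ | ⟨u1, u2, u3⟩ | ⟨u31, u32, u33⟩
      · exact anchored h42 hd hh hab hbc hac h3A h3B h3C h1A h1B h1C h2A h2B h2C h4A h4B h4C
          h13.symm h23.symm h34 h12 h14 h24 u1 u2 u3 s1ab s1ac s1bc s2ab s2ac s2bc s4ab s4ac s4bc
      · exact anchored h42 hd hh hab.symm hac hbc h3B h3A h3C h1B h1A h1C h2B h2A h2C h4B h4A h4C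
          h13.symm h23.symm h34 h12 h14 h24 u2 u1 u3
          (fun h => s1ab ⟨h.2, h.1⟩) s1bc s1ac
          (fun h => s2ab ⟨h.2, h.1⟩) s2bc s2ac
          (fun h => s4ab ⟨h.2, h.1⟩) s4bc s4ac
      · exact anchored h42 hd hh hac.symm hab hbc.symm h3C h3A h3B h1C h1A h1B h2C h2A h2B
          h4C h4A h4B h13.symm h23.symm h34 h12 h14 h24 u3 u1 u2
          (fun h => s1ac ⟨h.2, h.1⟩) (fun h => s1bc ⟨h.2, h.1⟩) s1ab
          (fun h => s2ac ⟨h.2, h.1⟩) (fun h => s2bc ⟨h.2, h.1⟩) s2ab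
          (fun h => s4ac ⟨h.2, h.1⟩) (fun h => s4bc ⟨h.2, h.1⟩) s4ab
      · rcases typeSplit s4ab s4ac s4bc with ⟨u1, u2, u3⟩ | ⟨u1, u2, u3⟩ | ⟨u1, u2, u3⟩ | ⟨u41, u42, u43⟩
        · exact anchored h42 hd hh hab hbc hac h4A h4B h4C h1A h1B h1C h2A h2B h2C h3A h3B h3C
            h14.symm h24.symm h34.symm h12 h13 h23 u1 u2 u3
            s1ab s1ac s1bc s2ab s2ac s2bc s3ab s3ac s3bc
        · exact anchored h42 hd hh hab.symm hac hbc h4B h4A h4C h1B h1A h1C h2B h2A h2C h3B h3A h3C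
            h14.symm h24.symm h34.symm h12 h13 h23 u2 u1 u3
            (fun h => s1ab ⟨h.2, h.1⟩) s1bc s1ac
            (fun h => s2ab ⟨h.2, h.1⟩) s2bc s2ac
            (fun h => s3ab ⟨h.2, h.1⟩) s3bc s3ac
        · exact anchored h42 hd hh hac.symm hab hbc.symm h4C h4A h4B h1C h1A h1B h2C h2A h2B
            h3C h3A h3B h14.symm h24.symm h34.symm h12 h13 h23 u3 u1 u2
            (fun h => s1ac ⟨h.2, h.1⟩) (fun h => s1bc ⟨h.2, h.1⟩) s1ab
            (fun h => s2ac ⟨h.2, h.1⟩) (fun h => s2bc ⟨h.2, h.1⟩) s2ab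
            (fun h => s3ac ⟨h.2, h.1⟩) (fun h => s3bc ⟨h.2, h.1⟩) s3ab
        · have A12 : G.Adj v1 v2 := forceAdj h42 hbc h12 h1B h1C h2B h2C u12 u13 u22 u23
          have A13 : G.Adj v1 v3 := forceAdj h42 hbc h13 h1B h1C h3B h3C u12 u13 u32 u33
          have A14 : G.Adj v1 v4 := forceAdj h42 hbc h14 h1B h1C h4B h4C u12 u13 u42 u43
          have A23 : G.Adj v2 v3 := forceAdj h42 hbc h23 h2B h2C h3B h3C u22 u23 u32 u33
          have A24 : G.Adj v2 v4 := forceAdj h42 hbc h24 h2B h2C h4B h4C u22 u23 u42 u43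
          exact hd ⟨v1, v2, v3, v4, h12, h13, h14, h23, h24, h34, A12, A13, A14, A23, A24⟩

lemma freshVertex {V : Type*} [Fintype V] (hn : 7 ≤ Fintype.card V) (s : Finset V)
    (hs : s.card ≤ 6) : ∃ v, v ∉ s := by
  by_contra hc
  push_neg at hc
  have hsub : (Finset.univ : Finset V) ⊆ s := fun v _ => hc v
  have := Finset.card_le_card hsub
  rw [Finset.card_univ] at this
  omega

lemma cardIns {V : Type*} [DecidableEq V] (v : V) (s : Finset V) {n : ℕ} (h : s.card ≤ n) :
    (insert v s).card ≤ n + 1 :=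
  (Finset.card_insert_le _ _).trans (by omega)

lemma fourOutside {V : Type*} [Fintype V] (hn : 7 ≤ Fintype.card V) (a b c : V) :
    ∃ v1 v2 v3 v4 : V,
      v1 ≠ a ∧ v1 ≠ b ∧ v1 ≠ c ∧ v2 ≠ a ∧ v2 ≠ b ∧ v2 ≠ c ∧
      v3 ≠ a ∧ v3 ≠ b ∧ v3 ≠ c ∧ v4 ≠ a ∧ v4 ≠ b ∧ v4 ≠ c ∧
      v1 ≠ v2 ∧ v1 ≠ v3 ∧ v1 ≠ v4 ∧ v2 ≠ v3 ∧ v2 ≠ v4 ∧ v3 ≠ v4 := by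
  classical
  obtain ⟨v1, hv1⟩ := freshVertex hn {a, b, c} (by
    have : ({a, b, c} : Finset V).card ≤ 3 := cardIns _ _ (cardIns _ _ (by simp))
    omega)
  obtain ⟨v2, hv2⟩ := freshVertex hn {v1, a, b, c} (by
    have : ({v1, a, b, c} : Finset V).card ≤ 4 :=
      cardIns _ _ (cardIns _ _ (cardIns _ _ (by simp)))
    omega)
  obtain ⟨v3, hv3⟩ := freshVertex hn {v2, v1, a, b, c} (by
    have : ({v2, v1, a, b, c} : Finset V).card ≤ 5 :=
      cardIns _ _ (cardIns _ _ (cardIns _ _ (cardIns _ _ (by simp))))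
    omega)
  obtain ⟨v4, hv4⟩ := freshVertex hn {v3, v2, v1, a, b, c} (by
    have : ({v3, v2, v1, a, b, c} : Finset V).card ≤ 6 :=
      cardIns _ _ (cardIns _ _ (cardIns _ _ (cardIns _ _ (cardIns _ _ (by simp)))))
    omega)
  simp only [Finset.mem_insert, Finset.mem_singleton, not_or] at hv1 hv2 hv3 hv4
  exact ⟨v1, v2, v3, v4, hv1.1, hv1.2.1, hv1.2.2, hv2.2.1, hv2.2.2.1, hv2.2.2.2,
    hv3.2.2.1, hv3.2.2.2.1, hv3.2.2.2.2, hv4.2.2.2.1, hv4.2.2.2.2.1, hv4.2.2.2.2.2,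
    Ne.symm hv2.1, Ne.symm hv3.2.1, Ne.symm hv4.2.2.1,
    Ne.symm hv3.1, Ne.symm hv4.2.1, Ne.symm hv4.1⟩

/-- Every 2-connected [4,2]-graph of order at least seven contains a diamond or a house. -/
theorem stmt_2 {V : Type*} [Fintype V] (G : SimpleGraph V)
    (h42 : IsSTGraph G 4 2) (h2c : TwoConnected G) (hn : 7 ≤ Fintype.card V) :
    HasDiamond G ∨ HasHouse G := by
  classical
  by_contra hcon
  push_neg at hcon
  obtain ⟨hd, hh⟩ := hcon
  by_cases htri : ∃ p q r : V, G.Adj p q ∧ G.Adj q r ∧ G.Adj p r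
  · obtain ⟨a, b, c, hab, hbc, hac⟩ := htri
    obtain ⟨v1, v2, v3, v4, h1A, h1B, h1C, h2A, h2B, h2C, h3A, h3B, h3C,
      h4A, h4B, h4C, h12, h13, h14, h23, h24, h34⟩ := fourOutside hn a b c
    exact triMain h42 hd hh hab hbc hac h1A h1B h1C h2A h2B h2C h3A h3B h3C
      h4A h4B h4C h12 h13 h14 h23 h24 h34
  · have noTri : ∀ p q r : V, G.Adj p q → G.Adj q r → G.Adj p r → False :=
      fun p q r h1 h2 h3 => htri ⟨p, q, r, h1, h2, h3⟩
    -- there is an independent triple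
    have indep : ∃ p q r : V, p ≠ q ∧ p ≠ r ∧ q ≠ r ∧
        ¬G.Adj p q ∧ ¬G.Adj p r ∧ ¬G.Adj q r := by
      by_contra hind
      push_neg at hind
      have hne : Nonempty V := Fintype.card_pos_iff.mp (by omega)
      obtain ⟨v⟩ := hne
      have hfil : (Finset.univ.filter (G.Adj v)).card ≤ 2 := by
        by_contra hbig
        push_neg at hbig
        rw [Finset.two_lt_card_iff] at hbig
        obtain ⟨p, q, r, hp, hq, hr, hpq, hpr, hqr⟩ := hbig
        have hvp : G.Adj v p := (Finset.mem_filter.mp hp).2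
        have hvq : G.Adj v q := (Finset.mem_filter.mp hq).2
        have hvr : G.Adj v r := (Finset.mem_filter.mp hr).2
        have npq : ¬G.Adj p q := fun h => noTri v p q hvp h hvq
        have npr : ¬G.Adj p r := fun h => noTri v p r hvp h hvr
        have nqr : ¬G.Adj q r := fun h => noTri v q r hvq h hvr
        exact nqr (hind p q r hpq hpr hqr npq npr)
      set N : Finset V := insert v (Finset.univ.filter (G.Adj v)) with hN
      have hNcard : N.card ≤ 3 := cardIns _ _ hfil
      obtain ⟨w1, hw1⟩ := freshVertex hn N (by omega)
      obtain ⟨w2, hw2⟩ := freshVertex hn (insert w1 N) (by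
        have := cardIns w1 N hNcard; omega)
      obtain ⟨w3, hw3⟩ := freshVertex hn (insert w2 (insert w1 N)) (by
        have := cardIns w2 _ (cardIns w1 N hNcard); omega)
      simp only [hN, Finset.mem_insert, Finset.mem_filter, Finset.mem_univ, true_and,
        not_or] at hw1 hw2 hw3
      obtain ⟨hw1v, hw1adj⟩ := hw1
      obtain ⟨hw21, hw2v, hw2adj⟩ := hw2
      obtain ⟨hw32, hw31, hw3v, hw3adj⟩ := hw3
      have A12 : G.Adj w1 w2 :=
        hind v w1 w2 (Ne.symm hw1v) (Ne.symm hw2v) (Ne.symm hw21) hw1adj hw2adj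
      have A13 : G.Adj w1 w3 :=
        hind v w1 w3 (Ne.symm hw1v) (Ne.symm hw3v) (Ne.symm hw31) hw1adj hw3adj
      have A23 : G.Adj w2 w3 :=
        hind v w2 w3 (Ne.symm hw2v) (Ne.symm hw3v) (Ne.symm hw32) hw2adj hw3adj
      exact noTri w1 w2 w3 A12 A23 A13
    obtain ⟨a, b, c, hab, hac, hbc, nab, nac, nbc⟩ := indep
    obtain ⟨w1, w2, w3, w4, h1A, h1B, h1C, h2A, h2B, h2C, h3A, h3B, h3C,
      h4A, h4B, h4C, h12, h13, h14, h23, h24, h34⟩ := fourOutside hn a b c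
    have mkD : ∀ w : V, w ≠ a → w ≠ b → w ≠ c →
        (G.Adj w a ∧ G.Adj w b) ∨ (G.Adj w a ∧ G.Adj w c) ∨ (G.Adj w b ∧ G.Adj w c) := by
      intro w hA hB hC
      have n1 : G.Adj w a ∨ G.Adj w b := by
        by_contra hcn
        push_neg at hcn
        exact fiveDead h42 hC hA hB hac.symm hbc.symm hab hcn.1 hcn.2
          (fun h => nac h.symm) (fun h => nbc h.symm) nab
      have n2 : G.Adj w a ∨ G.Adj w c := by
        by_contra hcn
        push_neg at hcn
        exact fiveDead h42 hB hA hC hab.symm hbc hac hcn.1 hcn.2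
          (fun h => nab h.symm) nbc nac
      have n3 : G.Adj w b ∨ G.Adj w c := by
        by_contra hcn
        push_neg at hcn
        exact fiveDead h42 hA hB hC hab hac hbc hcn.1 hcn.2 nab nac nbc
      tauto
    have D1 := mkD w1 h1A h1B h1C
    have D2 := mkD w2 h2A h2B h2C
    have D3 := mkD w3 h3A h3B h3C
    have D4 := mkD w4 h4A h4B h4C
    have np : ∀ u w : V,
        ((G.Adj u a ∧ G.Adj u b) ∨ (G.Adj u a ∧ G.Adj u c) ∨ (G.Adj u b ∧ G.Adj u c)) →
        ((G.Adj w a ∧ G.Adj w b) ∨ (G.Adj w a ∧ G.Adj w c) ∨ (G.Adj w b ∧ G.Adj w c)) →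
        ¬G.Adj u w := by
      intro u w Du Dw h
      rcases Du with ⟨p1, p2⟩ | ⟨p1, p2⟩ | ⟨p1, p2⟩ <;>
        rcases Dw with ⟨q1, q2⟩ | ⟨q1, q2⟩ | ⟨q1, q2⟩ <;>
          first
            | exact noTri _ u w p1.symm h q1.symm
            | exact noTri _ u w p1.symm h q2.symm
            | exact noTri _ u w p2.symm h q1.symm
            | exact noTri _ u w p2.symm h q2.symm
    exact fiveDead h42 h12 h13 h14 h23 h24 h34 (np w1 w3 D1 D3) (np w1 w4 D1 D4)
      (np w2 w3 D2 D3) (np w2 w4 D2 D4) (np w3 w4 D3 D4)
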